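/- Let c₋₁, c₀, c₁ > 0, T > 0, 0 < h ≤ T, K ≥ 0 and p ≥ 1. Let (Ω, F, P) be a probability space, Y a positive random variable with E[Y^{2p}] < ∞, and W a Gaussian random variable with mean 0 and variance h independent of Y. Let f_h, g_h : (0,∞) → ℝ be measurable with |f_h(x)| ≤ K h^{-1/2} and |g_h(x)| ≤ K h^{-1/2} for all x > 0, and let Y' be the unique positive root of Y' - c₋₁ h (Y')⁻¹ = Y + (-c₀ + c₁ Y + f_h(Y)) h + g_h(Y) W. Then there exist constants Ĉ, C̃ > 0 depending only on p, K, T, c₋₁, c₀, c₁ (and not on h) such that E[(Y')^{2p}] ≤ Ĉ·E[Y^{2p}] + C̃. -/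

import Mathlib

open MeasureTheory ProbabilityTheory


-- helper: (u+v)^q ≤ 2^q (u^q + v^q)
lemma aux_rpow_add_le {u v q : ℝ} (hu : 0 ≤ u) (hv : 0 ≤ v) (hq : 0 ≤ q) :
    (u + v) ^ q ≤ 2 ^ q * (u ^ q + v ^ q) := by
  have h1 : u + v ≤ 2 * max u v := by
    rcases max_cases u v with ⟨he, h⟩ | ⟨he, h⟩ <;> rw [he] <;> linarith
  calc (u + v) ^ q ≤ (2 * max u v) ^ q :=
        Real.rpow_le_rpow (by linarith) h1 hq
    _ = 2 ^ q * (max u v) ^ q := Real.mul_rpow (by norm_num) (le_max_iff.2 (Or.inl hu))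
    _ ≤ 2 ^ q * (u ^ q + v ^ q) := by
        gcongr 2 ^ q * ?_
        rcases max_cases u v with ⟨he, _⟩ | ⟨he, _⟩ <;> rw [he]
        · nlinarith [Real.rpow_nonneg hv q]
        · nlinarith [Real.rpow_nonneg hu q]

lemma aux_int_abs {b : ℝ} (hb : 0 < b) {s : ℝ} (hs : 0 ≤ s) :
    Integrable fun x : ℝ => |x| ^ s * Real.exp (-b * x ^ 2) := by
  have hs' : (-1:ℝ) < s := by linarith
  have base : IntegrableOn (fun x : ℝ => |x| ^ s * Real.exp (-b * x ^ 2)) (Set.Ioi 0) := by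
    refine (integrableOn_rpow_mul_exp_neg_mul_sq hb hs').congr_fun
      (fun x hx => by rw [abs_of_pos hx]) measurableSet_Ioi
  rw [← integrableOn_univ, ← @Set.Iio_union_Ici _ _ (0 : ℝ), integrableOn_union,
    integrableOn_Ici_iff_integrableOn_Ioi]
  refine ⟨?_, base⟩
  rw [← (Measure.measurePreserving_neg (volume : Measure ℝ)).integrableOn_comp_preimage
      (Homeomorph.neg ℝ).measurableEmbedding]
  simpa only [Function.comp_def, abs_neg, neg_sq, Set.neg_preimage, Set.neg_Iio, neg_neg,
    neg_zero] using base


lemma aux_meas (s : ℝ) : Measurable (fun x : ℝ => |x| ^ s) :=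
  by fun_prop

lemma aux_int_gauss {v : NNReal} (hv : v ≠ 0) {s : ℝ} (hs : 0 ≤ s) :
    Integrable (fun x : ℝ => |x| ^ s) (gaussianReal 0 v) := by
  have hv' : (0:ℝ) < v := by positivity
  rw [gaussianReal_of_var_ne_zero _ hv,
    integrable_withDensity_iff (measurable_gaussianPDF _ _)
      (ae_of_all _ fun x => ENNReal.ofReal_lt_top)]
  have heq : (fun x : ℝ => |x| ^ s * (gaussianPDF 0 v x).toReal)
      = fun x : ℝ => (Real.sqrt (2 * Real.pi * v))⁻¹ * (|x| ^ s * Real.exp (-(2 * (v:ℝ))⁻¹ * x ^ 2)) := by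
    funext x
    rw [gaussianPDF, ENNReal.toReal_ofReal (gaussianPDFReal_nonneg _ _ _), gaussianPDFReal]
    have : -(x - 0) ^ 2 / (2 * (v:ℝ)) = -(2 * (v:ℝ))⁻¹ * x ^ 2 := by
      rw [sub_zero]; field_simp
    rw [this]; ring
  rw [heq]
  exact (aux_int_abs (by positivity) hs).const_mul _

lemma aux_mom_gauss {h : ℝ} (hh : 0 < h) (s : ℝ) :
    ∫ x, |x| ^ s ∂(gaussianReal 0 h.toNNReal)
      = h ^ (s / 2) * ∫ x, |x| ^ s ∂(gaussianReal 0 1) := by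
  have hmap : (gaussianReal 0 1).map (fun x => Real.sqrt h * x) = gaussianReal 0 h.toNNReal := by
    have := gaussianReal_map_const_mul (μ := 0) (v := 1) (Real.sqrt h)
    rw [show ((Real.sqrt h * ·) : ℝ → ℝ) = fun x => Real.sqrt h * x from rfl] at this
    rw [this, mul_zero]
    congr 1
    ext
    simp [Real.sq_sqrt hh.le, Real.toNNReal, max_eq_left hh.le]
  rw [← hmap, integral_map (by fun_prop) (aux_meas s).aestronglyMeasurable]
  simp_rw [abs_mul, abs_of_nonneg (Real.sqrt_nonneg h),
    Real.mul_rpow (Real.sqrt_nonneg h) (abs_nonneg _)]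
  rw [integral_const_mul]
  congr 1
  rw [Real.sqrt_eq_rpow, ← Real.rpow_mul hh.le]
  ring_nf

/-- Rough one-step moment estimate for the positivity-preserving Euler-type
scheme: there exist constants `Ĉ, C̃ > 0` depending only on `p, K, T, c₋₁, c₀, c₁`
(and not on the step-size `h`) such that for any step-size `0 < h ≤ T`, any
positive iterate `Y` with finite `2p`-th moment, any independent Gaussian
increment `W` with mean `0` and variance `h`, and the next iterate `Y'` defined
as the unique positive root of the implicit relation, one has
`E[(Y')^{2p}] ≤ Ĉ E[Y^{2p}] + C̃`. -/
theorem stmt18 (cm1 c₀ c₁ T K p : ℝ) (hcm1 : 0 < cm1) (hc₀ : 0 < c₀) (hc₁ : 0 < c₁)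
    (hT : 0 < T) (hK : 0 ≤ K) (hp : 1 ≤ p) :
    ∃ Chat : ℝ, 0 < Chat ∧ ∃ Ctil : ℝ, 0 < Ctil ∧
      ∀ h : ℝ, 0 < h → h ≤ T →
      ∀ (Ω : Type) (mΩ : MeasurableSpace Ω) (P : Measure Ω), IsProbabilityMeasure P →
      ∀ (Y W Y' : Ω → ℝ) (fh gh : ℝ → ℝ),
        Measurable fh → Measurable gh → Measurable Y → Measurable W →
        (∀ ω, 0 < Y ω) →
        Integrable (fun ω => (Y ω) ^ (2 * p)) P →
        IndepFun Y W P →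
        P.map W = gaussianReal 0 (Real.toNNReal h) →
        (∀ x : ℝ, 0 < x → |fh x| ≤ K * h ^ (-(1 : ℝ) / 2)) →
        (∀ x : ℝ, 0 < x → |gh x| ≤ K * h ^ (-(1 : ℝ) / 2)) →
        (∀ ω, 0 < Y' ω ∧
          Y' ω - cm1 * h * (Y' ω)⁻¹ =
            Y ω + (-c₀ + c₁ * Y ω + fh (Y ω)) * h + gh (Y ω) * W ω) →
        ∫ ω, (Y' ω) ^ (2 * p) ∂P ≤ Chat * ∫ ω, (Y ω) ^ (2 * p) ∂P + Ctil := by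
  have hp0 : (0:ℝ) ≤ p := by linarith
  have h2p0 : (0:ℝ) ≤ 2 * p := by linarith
  set a1 : ℝ := 1 + c₁ * T with ha1def
  set a2 : ℝ := c₀ * T + K * T ^ ((1:ℝ)/2) with ha2def
  have ha1 : 0 < a1 := by positivity
  have ha2 : 0 ≤ a2 := by positivity
  set M : ℝ := ∫ x, |x| ^ (2 * p) ∂(gaussianReal 0 1) with hMdef
  have hM0 : 0 ≤ M := integral_nonneg fun x => Real.rpow_nonneg (abs_nonneg _) _
  set C1 : ℝ := 2^p * 2^(2*p) * a1^(2*p) with hC1def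
  set c2 : ℝ := 2^p * 2^(2*p) * 2^(2*p) * K^(2*p) with hc2def
  set c3 : ℝ := 2^p * (2*cm1*T)^p + 2^p * 2^(2*p) * 2^(2*p) * a2^(2*p) with hc3def
  have hc2nn : 0 ≤ c2 := by
    have : (0:ℝ) ≤ K^(2*p) := Real.rpow_nonneg hK _
    positivity
  have hc3pos : 0 < c3 := by
    have h1 : (0:ℝ) < 2^p * (2*cm1*T)^p := by positivity
    have h2 : (0:ℝ) ≤ a2^(2*p) := Real.rpow_nonneg ha2 _
    have h3 : (0:ℝ) ≤ 2^p * 2^(2*p) * 2^(2*p) * a2^(2*p) := by positivity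
    rw [hc3def]; linarith
  have hC1pos : 0 < C1 := by positivity
  have hCtilpos : 0 < c2 * M + c3 := by linarith [mul_nonneg hc2nn hM0, hc3pos]
  clear_value a1 a2 M C1 c2 c3
  refine ⟨C1, hC1pos, c2 * M + c3, hCtilpos, ?_⟩
  intro h hh hhT Ω mΩ P hP Y W Y' fh gh hfm hgm hYm hWm hYpos hYint _hind hmap hfb hgb hY'
  -- Gaussian moment facts
  have hvne : (Real.toNNReal h) ≠ 0 := ne_of_gt (Real.toNNReal_pos.mpr hh)
  have hWint : Integrable (fun ω => |W ω| ^ (2*p)) P := by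
    have h1 := aux_int_gauss hvne h2p0
    rw [← hmap] at h1
    exact (integrable_map_measure (aux_meas (2*p)).aestronglyMeasurable hWm.aemeasurable).mp h1
  have hWmom : ∫ ω, |W ω| ^ (2*p) ∂P = h ^ p * M := by
    rw [← integral_map hWm.aemeasurable (aux_meas (2*p)).aestronglyMeasurable, hmap,
      aux_mom_gauss hh (2*p), show (2*p)/2 = p by ring, hMdef]
  -- pointwise bound
  have key : ∀ ω, Y' ω ^ (2*p) ≤ C1 * Y ω ^ (2*p)
      + (c2 * h^(-p)) * |W ω|^(2*p) + c3 := by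
    intro ω
    obtain ⟨hy, hzeq⟩ := hY' ω
    set y := Y' ω with hydef
    set x := Y ω with hxdef
    have hx : 0 < x := hYpos ω
    set w : ℝ := |W ω| with hwdef
    have hw : 0 ≤ w := abs_nonneg _
    have hrne : (0:ℝ) < h ^ (-(1:ℝ)/2) := Real.rpow_pos_of_pos hh _
    set B : ℝ := K * h ^ (-(1:ℝ)/2) * w with hBdef
    have hB : 0 ≤ B := by positivity
    set S : ℝ := a1 * x + a2 + B with hSdef
    have hS : 0 ≤ S := by positivity
    set z : ℝ := x + (-c₀ + c₁ * x + fh x) * h + gh x * W ω with hzdef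
    have hyne : y ≠ 0 := ne_of_gt hy
    have hB' : 0 ≤ B := hB
    have hS' : 0 ≤ S := hS
    clear_value y x w B S z
    -- step A : y² ≤ 2 cm1 h + z²
    have e1 : y * y - cm1 * h = z * y := by
      have e := congrArg (fun t => t * y) hzeq
      simp only [sub_mul, mul_assoc, inv_mul_cancel₀ hyne, mul_one] at e
      exact e
    have hA : y^2 ≤ 2*(cm1*h) + z^2 := by
      have q1 : (0:ℝ) ≤ (z - y)^2 := sq_nonneg _
      have q2 : (z - y)^2 = z*z - 2*(z*y) + y*y := by ring
      have q3 : y^2 = y*y := by ring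
      have q4 : z^2 = z*z := by ring
      linarith [e1, q1, q2, q3, q4]
    -- |z| ≤ S
    have hf1 : |fh x| ≤ K * h ^ (-(1:ℝ)/2) := hfb x hx
    have hg1 : |gh x| ≤ K * h ^ (-(1:ℝ)/2) := hgb x hx
    have hrw : h^(-(1:ℝ)/2) * h = h^((1:ℝ)/2) := by
      nth_rewrite 2 [← Real.rpow_one h]
      rw [← Real.rpow_add hh]; norm_num
    have hrw2 : h^((1:ℝ)/2) ≤ T^((1:ℝ)/2) := Real.rpow_le_rpow hh.le hhT (by norm_num)
    have hm1 : |(-c₀ + c₁ * x + fh x)| ≤ c₀ + c₁ * x + K * h ^ (-(1:ℝ)/2) := by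
      have := abs_add_three (-c₀) (c₁ * x) (fh x)
      rw [abs_neg, abs_of_pos hc₀, abs_of_pos (mul_pos hc₁ hx)] at this
      linarith
    have hcb : |z| ≤ S := by
      have h1 : |z| ≤ |x| + |(-c₀ + c₁ * x + fh x) * h| + |gh x * W ω| := by
        rw [hzdef]; exact abs_add_three _ _ _
      rw [abs_of_pos hx, abs_mul, abs_mul, abs_of_pos hh, ← hwdef] at h1
      have h2 : |(-c₀ + c₁ * x + fh x)| * h ≤ (c₀ + c₁ * x + K * h ^ (-(1:ℝ)/2)) * h :=
        mul_le_mul_of_nonneg_right hm1 hh.le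
      have h3 : |gh x| * w ≤ K * h ^ (-(1:ℝ)/2) * w := mul_le_mul_of_nonneg_right hg1 hw
      have h4 : K * (h^(-(1:ℝ)/2) * h) ≤ K * T^((1:ℝ)/2) := by
        rw [hrw]; exact mul_le_mul_of_nonneg_left hrw2 hK
      have h5 : c₁ * x * h ≤ c₁ * x * T :=
        mul_le_mul_of_nonneg_left hhT (by positivity)
      have h6 : c₀ * h ≤ c₀ * T := mul_le_mul_of_nonneg_left hhT hc₀.le
      have h2r : |(-c₀ + c₁ * x + fh x)| * h
          ≤ c₀*h + c₁*x*h + K*(h^(-(1:ℝ)/2)*h) := by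
        have hexp : (c₀ + c₁ * x + K * h ^ (-(1:ℝ)/2)) * h
            = c₀*h + c₁*x*h + K*(h^(-(1:ℝ)/2)*h) := by ring
        linarith [h2]
      rw [hSdef, hBdef, ha1def, ha2def]
      have hexp2 : (1 + c₁*T)*x = x + c₁*T*x := by ring
      linarith [h1, h2r, h3, h4, h5, h6, hexp2]
    have hz2 : z^2 ≤ S^2 := by
      have h8 : |z| * |z| ≤ S*S := mul_self_le_mul_self (abs_nonneg z) hcb
      have h9 : |z| * |z| = z*z := abs_mul_abs_self z
      have q3 : z^2 = z*z := by ring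
      have q4 : S^2 = S*S := by ring
      linarith [h8, h9, q3, q4]
    -- rpow chain
    have e2 : y ^ (2*p) = (y^2) ^ p := by
      rw [← Real.rpow_natCast y 2, ← Real.rpow_mul hy.le]; norm_num
    have e3 : (S^2)^p = S^(2*p) := by
      rw [← Real.rpow_natCast S 2, ← Real.rpow_mul hS]; norm_num
    have t1 : (y^2)^p ≤ (2*cm1*T + S^2)^p := by
      apply Real.rpow_le_rpow (sq_nonneg y) _ hp0
      have hch : cm1*h ≤ cm1*T := mul_le_mul_of_nonneg_left hhT hcm1.le
      linarith [hA, hz2, hch]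
    have t2 : (2*cm1*T + S^2)^p ≤ 2^p * ((2*cm1*T)^p + (S^2)^p) :=
      aux_rpow_add_le (by positivity) (sq_nonneg S) hp0
    have t3 : S^(2*p) ≤ 2^(2*p) * ((a1*x)^(2*p) + (a2 + B)^(2*p)) := by
      have hS' : S = a1*x + (a2 + B) := by rw [hSdef]; ring
      rw [hS']
      exact aux_rpow_add_le (by positivity) (by positivity) h2p0
    have t4 : (a1*x)^(2*p) = a1^(2*p) * x^(2*p) := Real.mul_rpow ha1.le hx.le
    have t5 : (a2+B)^(2*p) ≤ 2^(2*p) * (a2^(2*p) + B^(2*p)) :=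
      aux_rpow_add_le ha2 hB h2p0
    have t6 : B^(2*p) = K^(2*p) * (h^(-p) * w^(2*p)) := by
      rw [hBdef, Real.mul_rpow (by positivity) hw, Real.mul_rpow hK hrne.le,
        ← Real.rpow_mul hh.le, show (-(1:ℝ)/2)*(2*p) = -p by ring]
      ring
    have t7 : S^(2*p) ≤ 2^(2*p) * (a1^(2*p) * x^(2*p)
        + 2^(2*p) * (a2^(2*p) + K^(2*p) * (h^(-p) * w^(2*p)))) := by
      calc S^(2*p) ≤ 2^(2*p) * ((a1*x)^(2*p) + (a2 + B)^(2*p)) := t3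
        _ ≤ 2^(2*p) * (a1^(2*p) * x^(2*p)
            + 2^(2*p) * (a2^(2*p) + K^(2*p) * (h^(-p) * w^(2*p)))) := by
          rw [t4, ← t6]
          gcongr
    calc y ^ (2*p) = (y^2)^p := e2
      _ ≤ (2*cm1*T + S^2)^p := t1
      _ ≤ 2^p * ((2*cm1*T)^p + S^(2*p)) := by rw [← e3]; exact t2
      _ ≤ 2^p * ((2*cm1*T)^p + 2^(2*p) * (a1^(2*p) * x^(2*p)
            + 2^(2*p) * (a2^(2*p) + K^(2*p) * (h^(-p) * w^(2*p))))) := by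
          gcongr
      _ = C1 * x ^ (2*p) + (c2 * h^(-p)) * w^(2*p) + c3 := by
          rw [hC1def, hc2def, hc3def]; ring
  -- integration
  have hGint : Integrable (fun ω => C1 * Y ω ^ (2*p)
      + (c2 * h^(-p)) * |W ω|^(2*p) + c3) P :=
    ((hYint.const_mul C1).add (hWint.const_mul _)).add (integrable_const c3)
  have hnn : (0:Ω → ℝ) ≤ᵐ[P] fun ω => Y' ω ^ (2*p) :=
    ae_of_all _ fun ω => Real.rpow_nonneg (hY' ω).1.le _
  have hhp1 : h^(-p) * h^p = 1 := by
    rw [← Real.rpow_add hh]; norm_num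
  calc ∫ ω, Y' ω ^ (2*p) ∂P
      ≤ ∫ ω, (C1 * Y ω ^ (2*p) + (c2 * h^(-p)) * |W ω|^(2*p) + c3) ∂P :=
        integral_mono_of_nonneg hnn hGint (ae_of_all _ key)
    _ = C1 * ∫ ω, Y ω ^ (2*p) ∂P + (c2 * h^(-p)) * ∫ ω, |W ω|^(2*p) ∂P + c3 := by
        have i1 : Integrable (fun ω => C1 * Y ω ^ (2*p)) P := hYint.const_mul C1
        have i2 : Integrable (fun ω => (c2 * h^(-p)) * |W ω|^(2*p)) P := hWint.const_mul _
        have i12 : Integrable (fun ω => C1 * Y ω ^ (2*p)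
            + (c2 * h^(-p)) * |W ω|^(2*p)) P := i1.add i2
        rw [integral_add i12 (integrable_const c3), integral_add i1 i2,
          integral_const_mul, integral_const_mul, integral_const, probReal_univ]
        simp
    _ = C1 * ∫ ω, Y ω ^ (2*p) ∂P + (c2 * M + c3) := by
        rw [hWmom]
        have : (c2 * h^(-p)) * (h^p * M) = c2 * M := by
          rw [show (c2 * h^(-p)) * (h^p * M) = c2 * M * (h^(-p) * h^p) from by ring,
            hhp1, mul_one]
        rw [this]; ring
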